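/- Let P be a potential graph with barrier digraph V, let S ⊊ N with T_S ≠ ∅, and let (a,b) be an edge of P with a ∈ S, b ∉ S realizing p_{ab} = min { p_{qr} : q ∈ S, r ∉ S, (q,r) an edge of P }. Then λ°_S = λ^{•a}_S + v_{ab}. -/

import Mathlib

open scoped Classical

namespace BarrierForests

variable {α : Type*} [Fintype α] [DecidableEq α]

/-- Total weight of a set of arcs. -/
def aweight (v : α → α → ℝ) (A : Finset (α × α)) : ℝ := ∑ a ∈ A, v a.1 a.2

/-- Weight `Υ^A_S` of the arcs of `A` whose tail lies in `S`. -/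
def aweightOn (v : α → α → ℝ) (A : Finset (α × α)) (S : Finset α) : ℝ :=
  ∑ a ∈ A.filter (fun a => a.1 ∈ S), v a.1 a.2

/-- The relation "there is an arc from `i` to `j` in `A`". -/
def arcRel (A : Finset (α × α)) : α → α → Prop := fun i j => (i, j) ∈ A

/-- Entering forest: every vertex has out-degree at most one, and there are no
directed cycles. -/
def IsEForest (A : Finset (α × α)) : Prop :=
  (∀ i j j', (i, j) ∈ A → (i, j') ∈ A → j = j') ∧
  ∀ i, ¬ Relation.TransGen (arcRel A) i i

/-- Roots of a (spanning) entering forest: the vertices with no outgoing arc. -/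
noncomputable def rootSet (A : Finset (α × α)) : Finset α :=
  Finset.univ.filter fun i => ∀ j, (i, j) ∉ A

/-- `𝓕^k`: spanning entering forests of the digraph with arc set `E`
having exactly `k` trees (equivalently, `k` roots). -/
def FSet (E : Finset (α × α)) (k : ℕ) : Set (Finset (α × α)) :=
  {A | A ⊆ E ∧ IsEForest A ∧ (rootSet A).card = k}

/-- The infimum (in `EReal`, so `⊤` for the empty family) of the `w`-weights of the
members of `s`. -/
noncomputable def minW {β : Type*} (s : Set β) (w : β → ℝ) : EReal :=
  sInf ((fun x => (w x : EReal)) '' s)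

/-- `φ^k`: minimum weight of a spanning entering forest with `k` trees. -/
noncomputable def phi (v : α → α → ℝ) (E : Finset (α × α)) (k : ℕ) : EReal :=
  minW (FSet E k) (aweight v)

/-- `F ∈ 𝓕̃^k`: minimal spanning entering forest with `k` trees. -/
def IsMinForest (v : α → α → ℝ) (E : Finset (α × α)) (k : ℕ) (F : Finset (α × α)) : Prop :=
  F ∈ FSet E k ∧ (aweight v F : EReal) = phi v E k

/-- Vertex set of the tree `T^F_i` of the entering forest `F` rooted at `i`:
all vertices from which `i` is reachable. -/
noncomputable def treeVerts (F : Finset (α × α)) (i : α) : Finset α :=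
  Finset.univ.filter fun j => Relation.ReflTransGen (arcRel F) j i

/-- Arc set of the tree `T^F_i`. -/
noncomputable def treeArcs (F : Finset (α × α)) (i : α) : Finset (α × α) :=
  F.filter fun a => a.1 ∈ treeVerts F i

/-- Induced subgraph (restriction) of the arc set `A` on the vertex set `S`. -/
def restrictArcs (A : Finset (α × α)) (S : Finset α) : Finset (α × α) :=
  A.filter fun a => a.1 ∈ S ∧ a.2 ∈ S

/-- `T ∈ 𝓣^{•q}_S`: `T` is an entering tree that is a subgraph of the digraph with
arc set `E`, with vertex set `S` and root `q`. -/
def IsTreeOn (E T : Finset (α × α)) (S : Finset α) (q : α) : Prop :=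
  q ∈ S ∧ T ⊆ E ∧ (∀ a ∈ T, a.1 ∈ S ∧ a.2 ∈ S) ∧
  (∀ i ∈ S, i ≠ q → ∃! j, (i, j) ∈ T) ∧
  (∀ j, (q, j) ∉ T) ∧
  ∀ i ∈ S, Relation.ReflTransGen (arcRel T) i q

/-- `λ^{•q}_S`. -/
noncomputable def lamB (v : α → α → ℝ) (E : Finset (α × α)) (S : Finset α) (q : α) : EReal :=
  minW {T | IsTreeOn E T S q} (aweight v)

/-- `λ^•_S = min_{q ∈ S} λ^{•q}_S`. -/
noncomputable def lamBul (v : α → α → ℝ) (E : Finset (α × α)) (S : Finset α) : EReal :=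
  minW {T | ∃ q ∈ S, IsTreeOn E T S q} (aweight v)

/-- `T ∈ 𝓣^{∘q}_S`: `T` has `|S| + 1` vertices, `T|_S` is an entering tree with vertex
set `S` and root `q`, and the single arc of `T` leaving `S` goes from `q` to the root
`r ∉ S` of `T`. -/
def IsCTreeOn (E T : Finset (α × α)) (S : Finset α) (q : α) : Prop :=
  ∃ r, r ∉ S ∧ ∃ T', IsTreeOn E T' S q ∧ (q, r) ∈ E ∧ T = insert (q, r) T'

/-- `λ^{∘q}_S`. -/
noncomputable def lamC (v : α → α → ℝ) (E : Finset (α × α)) (S : Finset α) (q : α) : EReal :=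
  minW {T | IsCTreeOn E T S q} (aweight v)

/-- `λ^∘_S = min_{q ∈ S} λ^{∘q}_S`. -/
noncomputable def lamCirc (v : α → α → ℝ) (E : Finset (α × α)) (S : Finset α) : EReal :=
  minW {T | ∃ q ∈ S, IsCTreeOn E T S q} (aweight v)

/-- `μ^∘_S`: minimum of `Υ^F_S` over the spanning entering forests `F ∈ 𝓕^∘_S`,
i.e. those in which every vertex of `S` has an outgoing arc. -/
noncomputable def muCirc (v : α → α → ℝ) (E : Finset (α × α)) (S : Finset α) : EReal :=
  minW {A | A ⊆ E ∧ IsEForest A ∧ ∀ i ∈ S, ∃ j, (i, j) ∈ A} fun A => aweightOn v A S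

/-- `G ∈ 𝓡^F_y`: `G` is a descendant of `F` at the root `y`, i.e. `y` is a root of
`F`, the roots of `G` are those of `F` except `y`, `G` induces `T^F_q` on the vertex
set of every tree of `F` other than `T^F_y`, and `G` induces a tree on the vertex set
of `T^F_y`. -/
def IsDescendant (E F G : Finset (α × α)) (y : α) : Prop :=
  y ∈ rootSet F ∧ rootSet G = rootSet F \ {y} ∧
  (∀ q ∈ rootSet G, restrictArcs G (treeVerts F q) = treeArcs F q) ∧
  ∃ a ∈ treeVerts F y, IsTreeOn E (restrictArcs G (treeVerts F y)) (treeVerts F y) a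

/-- A potential graph: a connected weighted undirected graph with a loop at every
vertex.  Edges are recorded as a symmetric reflexive set of ordered pairs, with a
symmetric weight function `p`. -/
structure PotGraph (α : Type*) [Fintype α] [DecidableEq α] where
  p : α → α → ℝ
  edges : Finset (α × α)
  symm_mem : ∀ i j, (i, j) ∈ edges → (j, i) ∈ edges
  loop_mem : ∀ i, (i, i) ∈ edges
  symm_w : ∀ i j, p i j = p j i
  connected : ∀ i j : α, Relation.ReflTransGen (fun a b => (a, b) ∈ edges ∧ a ≠ b) i j

/-- Arc set of the barrier digraph of the potential graph `P`: an arc `(i,j)`, `i ≠ j`,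
for each non-loop edge of `P`. -/
def barcs (P : PotGraph α) : Finset (α × α) := P.edges.filter fun a => a.1 ≠ a.2

/-- Arc weights of the barrier digraph: `v i j = p i j - p i i`. -/
def bw (P : PotGraph α) : α → α → ℝ := fun i j => P.p i j - P.p i i

/-- Weight of a set of undirected edges of `P`. -/
noncomputable def uweight (P : PotGraph α) (T : Finset (Sym2 α)) : ℝ :=
  ∑ e ∈ T, Sym2.lift ⟨P.p, P.symm_w⟩ e

/-- `T ∈ 𝓣_S`: `T` is an undirected tree that is a subgraph of `P` (loops unused)
with vertex set `S`: its edges are non-loop edges of `P` joining vertices of `S`,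
it is connected on `S`, and it has `|S| - 1` edges. -/
def IsUTreeOn (P : PotGraph α) (T : Finset (Sym2 α)) (S : Finset α) : Prop :=
  (∀ e ∈ T, ∃ i j, i ≠ j ∧ e = s(i, j) ∧ (i, j) ∈ P.edges ∧ i ∈ S ∧ j ∈ S) ∧
  (∀ i ∈ S, ∀ j ∈ S, Relation.ReflTransGen (fun a b => s(a, b) ∈ T) i j) ∧
  T.card + 1 = S.card

/-- `ν_S`: minimum weight of an undirected tree on `S` that is a subgraph of `P`. -/
noncomputable def nu (P : PotGraph α) (S : Finset α) : EReal :=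
  minW {T | IsUTreeOn P T S} (uweight P)

/-- The underlying undirected edge set of a set of arcs. -/
def undir (A : Finset (α × α)) : Finset (Sym2 α) := A.image fun a => s(a.1, a.2)

/-- `Tq` is the entering tree (with root `q`, vertex set `S`, subgraph of the barrier
digraph of `P`) corresponding to the undirected tree `T`: it is obtained from `T` by
directing all edges toward `q` and replacing the weight of each arc `(i,j)` by
`v i j = p i j - p i i`. -/
def Corresponds (P : PotGraph α) (Tq : Finset (α × α)) (T : Finset (Sym2 α))
    (S : Finset α) (q : α) : Prop :=
  IsTreeOn (barcs P) Tq S q ∧ undir Tq = T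

/-! ### Auxiliary lemmas for Statement 14 -/

section Statement14Aux
set_option linter.unusedSectionVars false

lemma minW_le' {β : Type*} {s : Set β} {w : β → ℝ} {x : β} (hx : x ∈ s) :
    minW s w ≤ (w x : EReal) := sInf_le ⟨x, hx, rfl⟩

lemma le_minW' {β : Type*} {s : Set β} {w : β → ℝ} {c : EReal}
    (h : ∀ x ∈ s, c ≤ (w x : EReal)) : c ≤ minW s w :=
  le_sInf (by rintro _ ⟨x, hx, rfl⟩; exact h x hx)

lemma minW_mem' {β : Type*} [Finite β] {s : Set β} {w : β → ℝ} (hs : s.Nonempty) :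
    ∃ x ∈ s, minW s w = (w x : EReal) := by
  have hfin : ((fun x => ((w x : ℝ) : EReal)) '' s).Finite := (Set.toFinite s).image _
  have hne : ((fun x => ((w x : ℝ) : EReal)) '' s).Nonempty := hs.image _
  obtain ⟨x, hx, he⟩ := hne.csInf_mem hfin
  exact ⟨x, hx, he.symm⟩

variable {E T : Finset (α × α)} {S : Finset α} {q : α}

lemma IsTreeOn.no_cycle (h : IsTreeOn E T S q) (i : α)
    (hi : Relation.ReflTransGen (arcRel T) i q) :
    ¬ Relation.TransGen (arcRel T) i i := by
  induction hi using Relation.ReflTransGen.head_induction_on with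
  | refl =>
    intro hc
    obtain ⟨k, hk, -⟩ := Relation.TransGen.head'_iff.mp hc
    exact h.2.2.2.2.1 k hk
  | @head x y hab hbq ih =>
    intro hc
    obtain ⟨c, hc1, hc2⟩ := Relation.TransGen.head'_iff.mp hc
    have hxS : x ∈ S := (h.2.2.1 _ hab).1
    have hxq : x ≠ q := by rintro rfl; exact h.2.2.2.2.1 _ hab
    have hcy : c = y := (h.2.2.2.1 x hxS hxq).unique hc1 hab
    subst hcy
    exact ih (Relation.TransGen.tail' hc2 hab)

lemma IsTreeOn.fst_mem_erase (h : IsTreeOn E T S q) {a : α × α} (ha : a ∈ T) :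
    a.1 ∈ S.erase q := by
  refine Finset.mem_erase.mpr ⟨fun hq => ?_, (h.2.2.1 a ha).1⟩
  exact h.2.2.2.2.1 a.2 (hq ▸ (show (a.1, a.2) ∈ T from ha))

lemma IsTreeOn.card_eq (h : IsTreeOn E T S q) : T.card = (S.erase q).card := by
  apply Finset.card_bij (fun a _ => a.1)
  · intro a ha; exact h.fst_mem_erase ha
  · rintro ⟨a1, a2⟩ ha ⟨b1, b2⟩ hb (hab : a1 = b1)
    subst hab
    have haS := Finset.mem_erase.mp (h.fst_mem_erase ha)
    have := (h.2.2.2.1 a1 haS.2 haS.1).unique ha hb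
    simp [this]
  · intro i hi
    obtain ⟨hiq, hiS⟩ := Finset.mem_erase.mp hi
    obtain ⟨j, hj, -⟩ := h.2.2.2.1 i hiS hiq
    exact ⟨(i, j), hj, rfl⟩

lemma IsTreeOn.undir_injOn (h : IsTreeOn E T S q) :
    Set.InjOn (fun a : α × α => s(a.1, a.2)) ↑T := by
  rintro ⟨a1, a2⟩ ha ⟨b1, b2⟩ hb hab
  simp only [Sym2.eq_iff] at hab
  rcases hab with ⟨rfl, rfl⟩ | ⟨h1, h2⟩
  · rfl
  · subst h1; subst h2
    by_cases hbb : a1 = a2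
    · subst hbb; rfl
    · exfalso
      have hcyc : Relation.TransGen (arcRel T) a1 a1 :=
        Relation.TransGen.head (show (a1, a2) ∈ T from Finset.mem_coe.mp ha)
          (Relation.TransGen.single (show (a2, a1) ∈ T from Finset.mem_coe.mp hb))
      exact h.no_cycle a1 (h.2.2.2.2.2 a1 (h.2.2.1 _ (Finset.mem_coe.mp ha)).1) hcyc

lemma IsTreeOn.weight_eq (P : PotGraph α) (h : IsTreeOn (barcs P) T S q) :
    aweight (bw P) T = uweight P (undir T) - ∑ i ∈ S.erase q, P.p i i := by
  have h1 : uweight P (undir T) = ∑ a ∈ T, P.p a.1 a.2 := by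
    rw [undir, uweight, Finset.sum_image (fun x hx y hy hxy =>
      h.undir_injOn (Finset.mem_coe.mpr hx) (Finset.mem_coe.mpr hy) hxy)]
    exact Finset.sum_congr rfl fun a _ => by obtain ⟨x, y⟩ := a; exact Sym2.lift_mk ..
  have h2 : ∑ a ∈ T, P.p a.1 a.1 = ∑ i ∈ S.erase q, P.p i i := by
    apply Finset.sum_bij (fun a _ => a.1)
    · intro a ha; exact h.fst_mem_erase ha
    · rintro ⟨a1, a2⟩ ha ⟨b1, b2⟩ hb (hab : a1 = b1)
      subst hab
      have haS := Finset.mem_erase.mp (h.fst_mem_erase ha)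
      have := (h.2.2.2.1 a1 haS.2 haS.1).unique ha hb
      simp [this]
    · intro i hi
      obtain ⟨hiq, hiS⟩ := Finset.mem_erase.mp hi
      obtain ⟨j, hj, -⟩ := h.2.2.2.1 i hiS hiq
      exact ⟨(i, j), hj, rfl⟩
    · intro a ha; rfl
  rw [aweight, h1, ← h2, ← Finset.sum_sub_distrib]
  rfl

lemma IsTreeOn.undir_isUTreeOn (P : PotGraph α) (h : IsTreeOn (barcs P) T S q) :
    IsUTreeOn P (undir T) S := by
  refine ⟨?_, ?_, ?_⟩
  · intro e he
    obtain ⟨a, ha, rfl⟩ := Finset.mem_image.mp he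
    have hb := h.2.1 ha
    rw [barcs, Finset.mem_filter] at hb
    exact ⟨a.1, a.2, hb.2, rfl, (show (a.1, a.2) ∈ P.edges from hb.1),
      (h.2.2.1 a ha).1, (h.2.2.1 a ha).2⟩
  · intro i hi j hj
    have key : ∀ x, Relation.ReflTransGen (arcRel T) x q →
        Relation.ReflTransGen (fun a b => s(a, b) ∈ undir T) x q := fun x hx =>
      Relation.ReflTransGen.mono (fun a b hab => Finset.mem_image.mpr ⟨(a, b), hab, rfl⟩) x q hx
    have hsym : Symmetric (fun a b => s(a, b) ∈ undir T) := by
      intro a b hab; rwa [Sym2.eq_swap] at hab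
    exact (key i (h.2.2.2.2.2 i hi)).trans
      ((@Relation.ReflTransGen.stdSymm _ _ ⟨fun _ _ h => hsym h⟩).symm _ _ (key j (h.2.2.2.2.2 j hj)))
  · have h1 : (undir T).card = T.card := Finset.card_image_of_injOn h.undir_injOn
    rw [h1, h.card_eq, Finset.card_erase_of_mem h.1]
    have : 0 < S.card := Finset.card_pos.mpr ⟨q, h.1⟩
    omega

/-- Chains of length `n` from `i` to `q` along `R`. -/
def chainTo {γ : Type*} (R : γ → γ → Prop) (q : γ) : ℕ → γ → Prop
  | 0, i => i = q
  | n + 1, i => ∃ j, R i j ∧ chainTo R q n j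

lemma rtg_chainTo {γ : Type*} {R : γ → γ → Prop} {q i : γ}
    (h : Relation.ReflTransGen R i q) : ∃ n, chainTo R q n i := by
  induction h using Relation.ReflTransGen.head_induction_on with
  | refl => exact ⟨0, rfl⟩
  | head hab _ ih => obtain ⟨n, hn⟩ := ih; exact ⟨n + 1, _, hab, hn⟩

/-- Any undirected tree on `S` can be oriented toward any root `q ∈ S`. -/
lemma exists_orientation (P : PotGraph α) {T : Finset (Sym2 α)} {S : Finset α}
    (h : IsUTreeOn P T S) {q : α} (hq : q ∈ S) :
    ∃ Tq, IsTreeOn (barcs P) Tq S q ∧ undir Tq = T := by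
  classical
  set R : α → α → Prop := fun i j => s(i, j) ∈ T with hR
  have hend : ∀ i j, R i j → i ∈ S ∧ j ∈ S ∧ i ≠ j ∧ (i, j) ∈ P.edges := by
    intro i j hij
    obtain ⟨i', j', hne', he', hm', hi', hj'⟩ := h.1 _ hij
    rcases Sym2.eq_iff.mp he' with ⟨rfl, rfl⟩ | ⟨rfl, rfl⟩
    · exact ⟨hi', hj', hne', hm'⟩
    · exact ⟨hj', hi', hne'.symm, P.symm_mem _ _ hm'⟩
  have hex : ∀ i ∈ S, ∃ n, chainTo R q n i := fun i hi => rtg_chainTo (h.2.1 i hi q hq)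
  set d : α → ℕ := fun i => if hh : ∃ n, chainTo R q n i then Nat.find hh else 0 with hd
  have hd_chain : ∀ i ∈ S, chainTo R q (d i) i := by
    intro i hi
    have hh := hex i hi
    simp only [hd, dif_pos hh]
    exact Nat.find_spec hh
  have hd_min : ∀ i n, chainTo R q n i → d i ≤ n := by
    intro i n hn
    have hh : ∃ n, chainTo R q n i := ⟨n, hn⟩
    simp only [hd, dif_pos hh]
    exact Nat.find_min' hh hn
  have hstep : ∀ i ∈ S, i ≠ q → ∃ j, R i j ∧ d j < d i := by
    intro i hi hiq
    have hc := hd_chain i hi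
    cases hdi : d i with
    | zero => rw [hdi] at hc; exact absurd hc hiq
    | succ m =>
      rw [hdi] at hc
      obtain ⟨j, hij, hj⟩ := hc
      exact ⟨j, hij, by have := hd_min j m hj; omega⟩
  set f : α → α := fun i => if hh : ∃ j, R i j ∧ d j < d i then hh.choose else i with hfdef
  have hf : ∀ i ∈ S, i ≠ q → R i (f i) ∧ d (f i) < d i := by
    intro i hi hiq
    have hh := hstep i hi hiq
    simp only [hfdef, dif_pos hh]
    exact hh.choose_spec
  set Tq : Finset (α × α) := (S.erase q).image (fun i => (i, f i)) with hTqdef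
  have hmemTq : ∀ x y, (x, y) ∈ Tq ↔ x ∈ S.erase q ∧ y = f x := by
    intro x y
    simp only [hTqdef, Finset.mem_image]
    constructor
    · rintro ⟨i, hi, heq⟩; cases heq; exact ⟨hi, rfl⟩
    · rintro ⟨hx, rfl⟩; exact ⟨x, hx, rfl⟩
  have hreach : ∀ n, ∀ i ∈ S, d i ≤ n → Relation.ReflTransGen (arcRel Tq) i q := by
    intro n
    induction n with
    | zero =>
      intro i hi hdi
      have hc := hd_chain i hi
      rw [Nat.le_zero.mp hdi] at hc
      exact hc ▸ Relation.ReflTransGen.refl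
    | succ n ih =>
      intro i hi hdi
      by_cases hiq : i = q
      · exact hiq ▸ Relation.ReflTransGen.refl
      · obtain ⟨hRf, hlt⟩ := hf i hi hiq
        have hfS : f i ∈ S := (hend _ _ hRf).2.1
        have harc : (i, f i) ∈ Tq :=
          (hmemTq i (f i)).mpr ⟨Finset.mem_erase.mpr ⟨hiq, hi⟩, rfl⟩
        exact Relation.ReflTransGen.head harc (ih (f i) hfS (by omega))
  refine ⟨Tq, ⟨hq, ?_, ?_, ?_, ?_, ?_⟩, ?_⟩
  · rintro ⟨x, y⟩ hxy
    obtain ⟨hx, rfl⟩ := (hmemTq x y).mp hxy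
    obtain ⟨hxq, hxS⟩ := Finset.mem_erase.mp hx
    obtain ⟨hRf, -⟩ := hf x hxS hxq
    obtain ⟨-, -, hne', hmem'⟩ := hend _ _ hRf
    exact Finset.mem_filter.mpr ⟨hmem', hne'⟩
  · rintro ⟨x, y⟩ hxy
    obtain ⟨hx, rfl⟩ := (hmemTq x y).mp hxy
    obtain ⟨hxq, hxS⟩ := Finset.mem_erase.mp hx
    obtain ⟨hRf, -⟩ := hf x hxS hxq
    exact ⟨hxS, (hend _ _ hRf).2.1⟩
  · intro i hiS hiq
    exact ⟨f i, (hmemTq i (f i)).mpr ⟨Finset.mem_erase.mpr ⟨hiq, hiS⟩, rfl⟩,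
      fun j hj => ((hmemTq i j).mp hj).2⟩
  · intro j hj
    have := (Finset.mem_erase.mp ((hmemTq q j).mp hj).1).1
    exact this rfl
  · intro i hi
    exact hreach (d i) i hi le_rfl
  · have hsub : undir Tq ⊆ T := by
      intro e he
      obtain ⟨⟨x, y⟩, hxy, rfl⟩ := Finset.mem_image.mp he
      obtain ⟨hx, rfl⟩ := (hmemTq x y).mp hxy
      obtain ⟨hxq, hxS⟩ := Finset.mem_erase.mp hx
      exact (hf x hxS hxq).1
    have h1 : (undir Tq).card = Tq.card := by
      apply Finset.card_image_of_injOn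
      rintro ⟨a1, a2⟩ ha ⟨b1, b2⟩ hb heq
      obtain ⟨ha', rfl⟩ := (hmemTq a1 a2).mp (Finset.mem_coe.mp ha)
      obtain ⟨hb', rfl⟩ := (hmemTq b1 b2).mp (Finset.mem_coe.mp hb)
      obtain ⟨ha1q, ha1S⟩ := Finset.mem_erase.mp ha'
      obtain ⟨hb1q, hb1S⟩ := Finset.mem_erase.mp hb'
      simp only [Sym2.eq_iff] at heq
      rcases heq with ⟨rfl, -⟩ | ⟨h1, h2⟩
      · rfl
      · exfalso
        have hlta := (hf a1 ha1S ha1q).2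
        have hltb := (hf b1 hb1S hb1q).2
        rw [h2] at hlta
        rw [← h1] at hltb
        omega
    have h2 : Tq.card = (S.erase q).card :=
      Finset.card_image_of_injOn (fun x _ y _ hxy => congrArg Prod.fst hxy)
    have hcard : T.card ≤ (undir Tq).card := by
      rw [h1, h2, Finset.card_erase_of_mem hq]
      have h3 := h.2.2
      have h4 : 0 < S.card := Finset.card_pos.mpr ⟨q, hq⟩
      omega
    exact Finset.eq_of_subset_of_card_le hsub hcard

end Statement14Aux

/-- Assertion 7.  If `S ⊊ N`, `𝓣_S ≠ ∅`, and `(a,b)` is an edge of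
`P` with `a ∈ S`, `b ∉ S` realizing the minimum of `p q r` over edges from `S` to its
complement, then `λ^∘_S = λ^{•a}_S + v a b`. -/
theorem statement14 (P : PotGraph α) (S : Finset α) (hS : S ⊂ Finset.univ)
    (hne : ∃ T, IsUTreeOn P T S)
    (a b : α) (ha : a ∈ S) (hb : b ∉ S) (hab : (a, b) ∈ P.edges)
    (hmin : ∀ q ∈ S, ∀ r, r ∉ S → (q, r) ∈ P.edges → P.p a b ≤ P.p q r) :
    lamCirc (bw P) (barcs P) S = lamB (bw P) (barcs P) S a + ((bw P a b : ℝ) : EReal) := by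
  obtain ⟨T0, hT0⟩ := hne
  obtain ⟨Ta0, hTa0, -⟩ := exists_orientation P hT0 ha
  obtain ⟨Tm, hTm, hTmEq⟩ := minW_mem' (s := {T | IsTreeOn (barcs P) T S a})
    (w := aweight (bw P)) ⟨Ta0, hTa0⟩
  have hab_barcs : (a, b) ∈ barcs P :=
    Finset.mem_filter.mpr ⟨hab, fun hEq => hb ((show a = b from hEq) ▸ ha)⟩
  have habT : ∀ {T' : Finset (α × α)} {q r : α}, IsTreeOn (barcs P) T' S q → r ∉ S →
      (q, r) ∉ T' := fun hT' hr hmem => hr (hT'.2.2.1 _ hmem).2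
  have hTm' : IsTreeOn (barcs P) Tm S a := hTm
  refine le_antisymm ?_ ?_
  · -- ≤ : use the minimal tree rooted at a, extended with the arc (a,b)
    have hmem : insert (a, b) Tm ∈ {T | ∃ q ∈ S, IsCTreeOn (barcs P) T S q} :=
      ⟨a, ha, b, hb, Tm, hTm', hab_barcs, rfl⟩
    have hwt : aweight (bw P) (insert (a, b) Tm) = aweight (bw P) Tm + bw P a b := by
      rw [aweight, Finset.sum_insert (habT hTm' hb)]
      rw [aweight]; ring
    refine le_trans (minW_le' hmem) ?_
    rw [hwt, EReal.coe_add, lamB, hTmEq]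
  · -- ≥
    refine le_minW' ?_
    rintro T ⟨q, hq, r, hr, T', hT', hqr, rfl⟩
    obtain ⟨Ta, hTa, hTaU⟩ := exists_orientation P (hT'.undir_isUTreeOn P) ha
    have w1 := hT'.weight_eq P
    have w2 := hTa.weight_eq P
    rw [hTaU] at w2
    have hq_edges : (q, r) ∈ P.edges := (Finset.mem_filter.mp hqr).1
    have hpmin : P.p a b ≤ P.p q r := hmin q hq r hr hq_edges
    have hsum_q : ∑ i ∈ S.erase q, P.p i i = ∑ i ∈ S, P.p i i - P.p q q :=
      Finset.sum_erase_eq_sub hq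
    have hsum_a : ∑ i ∈ S.erase a, P.p i i = ∑ i ∈ S, P.p i i - P.p a a :=
      Finset.sum_erase_eq_sub ha
    have hwt : aweight (bw P) (insert (q, r) T') = aweight (bw P) T' + bw P q r := by
      rw [aweight, Finset.sum_insert (habT hT' hr)]
      rw [aweight]; ring
    have hreal : aweight (bw P) Ta + bw P a b ≤ aweight (bw P) (insert (q, r) T') := by
      rw [hwt, w1, w2, hsum_q, hsum_a]
      simp only [bw]
      linarith
    have h1 : lamB (bw P) (barcs P) S a ≤ (aweight (bw P) Ta : EReal) :=
      minW_le' (show Ta ∈ {T | IsTreeOn (barcs P) T S a} from hTa)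
    calc lamB (bw P) (barcs P) S a + ((bw P a b : ℝ) : EReal)
        ≤ (aweight (bw P) Ta : EReal) + ((bw P a b : ℝ) : EReal) := add_le_add_left h1 _
      _ = ((aweight (bw P) Ta + bw P a b : ℝ) : EReal) := (EReal.coe_add _ _).symm
      _ ≤ ((aweight (bw P) (insert (q, r) T') : ℝ) : EReal) := EReal.coe_le_coe_iff.mpr hreal

end BarrierForests
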